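/- Let G be an almost simple group with socle T and let R be a Sylow r-subgroup of G with R ∩ T ≠ 1. Then R is contained in a unique maximal subgroup of G if and only if G has a unique conjugacy class of maximal subgroups whose index is coprime to r. -/

import Mathlib

open Pointwise

/-- Corollary 2.4: let `G` be an almost simple group with socle `T` and let `R` be a Sylow
`r`-subgroup of `G` with `R ⊓ T ≠ 1`. Then `R` is contained in a unique maximal subgroup of
`G` if and only if `G` has a unique conjugacy class of maximal subgroups of `r'`-index. -/
theorem stmt_14 {G : Type*} [Group G] [Finite G] (T : Subgroup G) [T.Normal]
    (hsimple : IsSimpleGroup ↥T) (hnonab : ∃ a b : ↥T, a * b ≠ b * a)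
    (hcent : Subgroup.centralizer (T : Set G) = ⊥)
    {r : ℕ} (hr : r.Prime) (R : Sylow r G)
    (hRT : (R : Subgroup G) ⊓ T ≠ ⊥) :
    (∃! H : Subgroup G, IsCoatom H ∧ (R : Subgroup G) ≤ H) ↔
      ((∃ H : Subgroup G, IsCoatom H ∧ ¬ r ∣ H.index) ∧
        ∀ H₁ H₂ : Subgroup G, IsCoatom H₁ → ¬ r ∣ H₁.index →
          IsCoatom H₂ → ¬ r ∣ H₂.index →
          ∃ g : G, H₁.map (MulAut.conj g).toMonoidHom = H₂) := by
  haveI : Fact r.Prime := ⟨hr⟩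
  -- `map (conj g)` is pointwise smul
  have hmap : ∀ (g : G) (H : Subgroup G),
      H.map (MulAut.conj g).toMonoidHom = MulAut.conj g • H := fun _ _ => rfl
  -- pointwise smul preserves coatoms
  have htop : ∀ b : MulAut G, b • (⊤ : Subgroup G) = ⊤ := fun b =>
    le_antisymm le_top fun x _ => by
      rw [Subgroup.mem_pointwise_smul_iff_inv_smul_mem]; trivial
  have hcoatom : ∀ (a : MulAut G) (H : Subgroup G), IsCoatom H → IsCoatom (a • H) := by
    intro a H hH
    constructor
    · intro h
      apply hH.1
      have := congrArg (a⁻¹ • ·) h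
      simpa [htop] using this
    · intro K hK
      have hle : H ≤ a⁻¹ • K := by
        rw [Subgroup.subset_pointwise_smul_iff, inv_inv]; exact hK.le
      have hne : H ≠ a⁻¹ • K := fun h => hK.ne (by rw [h, smul_inv_smul])
      have h2 := hH.2 _ (lt_of_le_of_ne hle hne)
      rw [← smul_inv_smul a K, h2, htop]
  -- conjugating a subgroup by one of its elements fixes it
  have hfixself : ∀ (M : Subgroup G) (x : G), x ∈ M → MulAut.conj x • M = M := by
    intro M x hx
    refine le_antisymm (fun y hy => ?_) (fun y hy => ?_)
    · rw [Subgroup.mem_pointwise_smul_iff_inv_smul_mem] at hy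
      have hc : (MulAut.conj x)⁻¹ • y = x⁻¹ * y * x := by simp [MulAut.smul_def]
      rw [hc] at hy
      have := M.mul_mem (M.mul_mem hx hy) (M.inv_mem hx)
      simpa [mul_assoc] using this
    · rw [Subgroup.mem_pointwise_smul_iff_inv_smul_mem]
      have hc : (MulAut.conj x)⁻¹ • y = x⁻¹ * y * x := by simp [MulAut.smul_def]
      rw [hc]
      exact M.mul_mem (M.mul_mem (M.inv_mem hx) hy) hx
  -- a maximal overgroup of `R` has `r'`-index
  have hidx : ∀ H : Subgroup G, (R : Subgroup G) ≤ H → ¬ r ∣ H.index := by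
    intro H hRH hd
    exact R.not_dvd_index (hd.trans (Subgroup.index_dvd_of_le hRH))
  -- a subgroup of `r'`-index contains a conjugate of `R`
  have hfix : ∀ H : Subgroup G, ¬ r ∣ H.index →
      ∃ g : G, (R : Subgroup G) ≤ MulAut.conj g • H := by
    intro H hH
    have hcard : ¬ r ∣ Nat.card (G ⧸ H) := by rwa [← Subgroup.index_eq_card]
    obtain ⟨q, hq⟩ := R.2.nonempty_fixed_point_of_prime_not_dvd_card (G ⧸ H) hcard
    obtain ⟨g, rfl⟩ := QuotientGroup.mk_surjective q
    refine ⟨g, fun x hx => ?_⟩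
    rw [Subgroup.mem_pointwise_smul_iff_inv_smul_mem]
    have h1 : (⟨x, hx⟩ : (R : Subgroup G)) • (QuotientGroup.mk g : G ⧸ H) = QuotientGroup.mk g :=
      hq _
    have h2 : (QuotientGroup.mk (x * g) : G ⧸ H) = QuotientGroup.mk g := h1
    rw [QuotientGroup.eq] at h2
    have h3 : (g⁻¹ * (x⁻¹ * g))⁻¹ ∈ H := H.inv_mem (by simpa [mul_assoc] using h2)
    have hc : (MulAut.conj g)⁻¹ • x = g⁻¹ * x * g := by simp [MulAut.smul_def]
    rw [hc]
    simpa [mul_assoc] using h3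
  -- the normalizer of `R` is a proper subgroup
  have hNtop : Subgroup.normalizer ((R : Subgroup G) : Set G) ≠ ⊤ := by
    have hTR : ¬ T ≤ (R : Subgroup G) := by
      intro hle
      have hpT : IsPGroup r T := R.2.to_le hle
      haveI : Nontrivial ↥T := hsimple.toNontrivial
      haveI := hpT.center_nontrivial
      obtain ⟨z, hz⟩ := exists_ne (1 : Subgroup.center ↥T)
      have hxc : ((z : ↥T) : G) ∈ Subgroup.centralizer (T : Set G) := by
        rw [Subgroup.mem_centralizer_iff]
        intro g hg
        have := (Subgroup.mem_center_iff.mp z.2) ⟨g, hg⟩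
        exact congrArg Subtype.val this
      rw [hcent, Subgroup.mem_bot] at hxc
      exact hz (by ext; exact hxc)
    intro htop'
    have hRn : (R : Subgroup G).Normal := Subgroup.normalizer_eq_top_iff.mp htop'
    have hinf : ((R : Subgroup G) ⊓ T).Normal := by
      constructor
      intro n hn g
      exact ⟨hRn.conj_mem _ hn.1 g, ‹T.Normal›.conj_mem _ hn.2 g⟩
    have hno : (((R : Subgroup G) ⊓ T).subgroupOf T).Normal := hinf.subgroupOf T
    rcases hsimple.eq_bot_or_eq_top_of_normal _ hno with h | h
    · rw [Subgroup.subgroupOf_eq_bot] at h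
      exact hRT (le_bot_iff.mp (le_trans (le_inf le_rfl inf_le_right) h.le_bot))
    · rw [Subgroup.subgroupOf_eq_top] at h
      exact hTR (le_trans h inf_le_left)
  constructor
  · rintro ⟨H, ⟨hH, hRH⟩, huniq⟩
    refine ⟨⟨H, hH, hidx H hRH⟩, fun H₁ H₂ h1 h1i h2 h2i => ?_⟩
    obtain ⟨g₁, hg₁⟩ := hfix H₁ h1i
    obtain ⟨g₂, hg₂⟩ := hfix H₂ h2i
    have e₁ : MulAut.conj g₁ • H₁ = H := huniq _ ⟨hcoatom _ _ h1, hg₁⟩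
    have e₂ : MulAut.conj g₂ • H₂ = H := huniq _ ⟨hcoatom _ _ h2, hg₂⟩
    refine ⟨g₂⁻¹ * g₁, ?_⟩
    rw [hmap, map_mul, mul_smul, e₁, map_inv, ← e₂, inv_smul_smul]
  · rintro ⟨-, hconj⟩
    obtain ⟨M, hM, hNM⟩ :
        ∃ M : Subgroup G, IsCoatom M ∧ Subgroup.normalizer ((R : Subgroup G) : Set G) ≤ M := by
      haveI : Finite (Subgroup G) :=
        Finite.of_injective (fun H : Subgroup G => (H : Set G)) fun _ _ h =>
          SetLike.coe_injective h
      rcases (IsCoatomic.eq_top_or_exists_le_coatom (Subgroup.normalizer ((R : Subgroup G) : Set G))) with h | h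
      · exact absurd h hNtop
      · obtain ⟨M, hM, hle⟩ := h; exact ⟨M, hM, hle⟩
    have hRM : (R : Subgroup G) ≤ M := le_trans Subgroup.le_normalizer hNM
    refine ⟨M, ⟨hM, hRM⟩, ?_⟩
    rintro H ⟨hH, hRH⟩
    obtain ⟨g, hg⟩ := hconj H M hH (hidx H hRH) hM (hidx M hRM)
    rw [hmap] at hg
    -- both `R` and `g • R` are Sylow subgroups of `M`
    have h2 : ((g • R : Sylow r G) : Subgroup G) ≤ M := by
      have : ((g • R : Sylow r G) : Subgroup G) = MulAut.conj g • (R : Subgroup G) := rfl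
      rw [this, ← hg]
      exact Subgroup.pointwise_smul_le_pointwise_smul_iff.mpr hRH
    obtain ⟨m, hm⟩ := MulAction.exists_smul_eq (↥M) ((g • R).subtype h2) (R.subtype hRM)
    simp_rw [Sylow.smul_subtype, Subgroup.smul_def, smul_smul] at hm
    have hmem : (↑m * g : G) ∈ Subgroup.normalizer ((R : Subgroup G) : Set G) :=
      Sylow.smul_eq_iff_mem_normalizer.mp (Sylow.subtype_injective hm)
    have hgM : g ∈ M := by
      have h3 : (↑m * g : G) ∈ M := hNM hmem
      have := M.mul_mem (M.inv_mem m.2) h3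
      simpa using this
    calc H = (MulAut.conj g)⁻¹ • (MulAut.conj g • H) := (inv_smul_smul _ _).symm
    _ = (MulAut.conj g)⁻¹ • M := by rw [hg]
    _ = MulAut.conj g⁻¹ • M := by rw [map_inv]
    _ = M := hfixself M g⁻¹ (M.inv_mem hgM)
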